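/- arXiv:2310.15613 — 2 statements merged into one kernel-verified Lean document; each statement's English description precedes it below -/
import Mathlib

section
/- Let μ, σ, ν, θ, p be real numbers with μ > 2, 0 ≤ σ < μ − 1, ν ≥ 3, 0 < θ ≤ ν, and p > 2. Then the inequality 2p/(θ(p−2)) − ν/θ > μ/(μ−σ−1) holds if and only if p < (θμ + (ν+2)(μ−σ−1))/(θμ + (ν−2)(μ−σ−1)) + 1. Moreover, (θμ + (ν+2)(μ−σ−1))/(θμ + (ν−2)(μ−σ−1)) + 1 < 2ν/(ν−2). -/
theorem stmt_2 (μ σ ν θ p : ℝ) (hμ : 2 < μ) (hσ0 : 0 ≤ σ) (hσ : σ < μ - 1)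
    (hν : 3 ≤ ν) (hθ0 : 0 < θ) (hθν : θ ≤ ν) (hp : 2 < p) :
    (2 * p / (θ * (p - 2)) - ν / θ > μ / (μ - σ - 1) ↔
      p < (θ * μ + (ν + 2) * (μ - σ - 1)) / (θ * μ + (ν - 2) * (μ - σ - 1)) + 1) ∧
    (θ * μ + (ν + 2) * (μ - σ - 1)) / (θ * μ + (ν - 2) * (μ - σ - 1)) + 1
      < 2 * ν / (ν - 2) := by
  have ha : 0 < μ - σ - 1 := by linarith
  have hθμ : 0 < θ * μ := mul_pos hθ0 (by linarith)
  have hD : 0 < θ * μ + (ν - 2) * (μ - σ - 1) := by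
    have : 0 < (ν - 2) * (μ - σ - 1) := mul_pos (by linarith) ha
    linarith
  have hν2 : 0 < ν - 2 := by linarith
  have h1 : 0 < θ * (p - 2) := mul_pos hθ0 (by linarith)
  have e : 2 * p / (θ * (p - 2)) - ν / θ = (2 * p - ν * (p - 2)) / (θ * (p - 2)) := by
    rw [div_sub_div _ _ h1.ne' hθ0.ne', div_eq_div_iff (mul_ne_zero h1.ne' hθ0.ne') h1.ne']
    ring
  constructor
  · rw [gt_iff_lt, e, div_lt_div_iff₀ ha h1, ← sub_lt_iff_lt_add, lt_div_iff₀ hD]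
    constructor <;> intro h <;> nlinarith
  · rw [div_add' _ _ _ (ne_of_gt hD), div_lt_div_iff₀ hD hν2]
    nlinarith
end

section
/- Let (Y, μ) be a finite measure space, let q > 1, let G be a normed vector space, and let ι : G → L^q(Y, μ) be a bounded linear map. Assume that every bounded sequence (u_k) in G has a subsequence (u_{k_j}) such that the functions ι(u_{k_j}) converge μ-almost everywhere on Y. Then for every s with 1 ≤ s < q, the map from G to L^s(Y, μ) obtained by composing ι with the natural inclusion L^q(Y,μ) ⊆ L^s(Y,μ) is a compact operator, i.e. it maps bounded subsets of G to relatively compact subsets of L^s(Y, μ). -/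
open MeasureTheory Filter
open scoped ENNReal

/-- A set in a uniform space is totally bounded if every sequence in it has a
Cauchy subsequence. -/
theorem stmt_16_aux_totallyBounded {X : Type*} [UniformSpace X] {s : Set X}
    (h : ∀ u : ℕ → X, (∀ n, u n ∈ s) →
      ∃ φ : ℕ → ℕ, StrictMono φ ∧ CauchySeq (u ∘ φ)) :
    TotallyBounded s := by
  intro V V_in
  by_contra hV
  push_neg at hV
  have hP : ∀ t : Set X, t.Finite → ∃ c, c ∈ s ∧ ∀ y ∈ t, (c, y) ∉ V := by
    intro t ht
    rcases Set.not_subset.1 (hV t ht) with ⟨c, hcs, hc⟩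
    refine ⟨c, hcs, fun y hy hcy => hc ?_⟩
    exact Set.mem_biUnion hy hcy
  obtain ⟨u, hu⟩ := Set.seq_of_forall_finite_exists
    (P := fun c t => c ∈ s ∧ ∀ y ∈ t, (c, y) ∉ V) hP
  obtain ⟨φ, hφ, hc⟩ := h u fun n => (hu n).1
  obtain ⟨N, hN⟩ : ∃ N, ∀ a b, a ≥ N → b ≥ N → (u (φ a), u (φ b)) ∈ V :=
    hc.mem_entourage V_in
  exact (hu (φ (N + 1))).2 (u (φ N))
    (Set.mem_image_of_mem u (hφ (Nat.lt_add_one N))) (hN (N + 1) N N.le_succ le_rfl)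

theorem stmt_16
    {Y : Type*} [MeasurableSpace Y] (μ : Measure Y) [IsFiniteMeasure μ]
    (q : ℝ) (hq : 1 < q) [Fact (1 ≤ ENNReal.ofReal q)]
    {G : Type*} [NormedAddCommGroup G] [NormedSpace ℝ G]
    (ι : G →L[ℝ] Lp ℝ (ENNReal.ofReal q) μ)
    (hae : ∀ u : ℕ → G, Bornology.IsBounded (Set.range u) →
      ∃ φ : ℕ → ℕ, StrictMono φ ∧
        ∀ᵐ y ∂μ, ∃ l : ℝ,
          Tendsto (fun j => (ι (u (φ j)) : Y → ℝ) y) atTop (nhds l))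
    (s : ℝ) (hs1 : 1 ≤ s) (hsq : s < q) [Fact (1 ≤ ENNReal.ofReal s)] :
    ∃ J : G → Lp ℝ (ENNReal.ofReal s) μ,
      (∀ u : G, (J u : Y → ℝ) =ᵐ[μ] (ι u : Y → ℝ)) ∧
      ∀ S : Set G, Bornology.IsBounded S → IsCompact (closure (J '' S)) := by
  set p := ENNReal.ofReal q with hp_def
  set r := ENNReal.ofReal s with hr_def
  have hs0 : (0 : ℝ) < s := lt_of_lt_of_le one_pos hs1
  have hq0 : (0 : ℝ) < q := lt_trans hs0 hsq
  have hrp : r ≤ p := ENNReal.ofReal_le_ofReal hsq.le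
  have hr_ne_top : r ≠ ∞ := ENNReal.ofReal_ne_top
  have hr1 : (1 : ℝ≥0∞) ≤ r := Fact.out
  have hr_toReal : r.toReal = s := ENNReal.toReal_ofReal hs0.le
  have hp_toReal : p.toReal = q := ENNReal.toReal_ofReal hq0.le
  have hmem : ∀ u : G, MemLp (ι u : Y → ℝ) r μ := fun u =>
    (Lp.memLp (ι u)).mono_exponent hrp
  refine ⟨fun u => (hmem u).toLp _, fun u => (hmem u).coeFn_toLp, ?_⟩
  intro S hS
  apply TotallyBounded.isCompact_of_isClosed (totallyBounded_closure.mpr ?_) isClosed_closure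
  apply stmt_16_aux_totallyBounded
  intro v hv
  have : ∀ n, ∃ w ∈ S, (hmem w).toLp (ι w : Y → ℝ) = v n := fun n => hv n
  choose w hwS hwv using this
  have hwbdd : Bornology.IsBounded (Set.range w) :=
    hS.subset (Set.range_subset_iff.2 hwS)
  obtain ⟨φ, hφ, hconv⟩ := hae w hwbdd
  obtain ⟨M, hM⟩ := isBounded_iff_forall_norm_le.1 hS
  -- uniform L^q bound
  set C : ℝ≥0∞ := ENNReal.ofReal (‖ι‖ * M) with hC_def
  have hC_ne_top : C ≠ ∞ := ENNReal.ofReal_ne_top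
  have hC : ∀ k, eLpNorm (ι (w k) : Y → ℝ) p μ ≤ C := by
    intro k
    have h1 : eLpNorm (ι (w k) : Y → ℝ) p μ = ENNReal.ofReal ‖ι (w k)‖ := by
      rw [Lp.norm_def, ENNReal.ofReal_toReal (Lp.eLpNorm_ne_top _)]
    rw [h1]
    exact ENNReal.ofReal_le_ofReal ((ι.le_opNorm _).trans
      (mul_le_mul_of_nonneg_left (hM _ (hwS k)) (norm_nonneg (ι : G →L[ℝ] _))))
  set f : ℕ → Y → ℝ := fun j => (ι (w (φ j)) : Y → ℝ) with hf_def
  have hf_meas : ∀ j, AEStronglyMeasurable (f j) μ := fun j => Lp.aestronglyMeasurable _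
  -- the a.e. limit
  set g : Y → ℝ := fun y => limUnder atTop (fun j => f j y) with hg_def
  have hg_tendsto : ∀ᵐ y ∂μ, Tendsto (fun j => f j y) atTop (nhds (g y)) := by
    filter_upwards [hconv] with y hy
    obtain ⟨l, hl⟩ := hy
    have : g y = l := hl.limUnder_eq
    rw [this]; exact hl
  have hg_meas : AEStronglyMeasurable g μ :=
    aestronglyMeasurable_of_tendsto_ae atTop hf_meas hg_tendsto
  have hgq : MemLp g p μ := by
    refine ⟨hg_meas, ?_⟩
    refine lt_of_le_of_lt (Lp.eLpNorm_lim_le_liminf_eLpNorm hf_meas g hg_tendsto) ?_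
    have h1 : Filter.liminf (fun j => eLpNorm (f j) p μ) atTop ≤
        Filter.limsup (fun j => eLpNorm (f j) p μ) atTop := Filter.liminf_le_limsup
    have h2 : Filter.limsup (fun j => eLpNorm (f j) p μ) atTop ≤ C :=
      Filter.limsup_le_of_le (by isBoundedDefault) (Eventually.of_forall fun j => hC (φ j))
    exact lt_of_le_of_lt (h1.trans h2) hC_ne_top.lt_top
  have hgr : MemLp g r μ := hgq.mono_exponent hrp
  -- uniform integrability in L^s
  have hui : UnifIntegrable f r μ := by
    intro ε hε
    set e : ℝ := 1 / s - 1 / q with he_def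
    have he0 : 0 < e := sub_pos.2 (one_div_lt_one_div_of_lt hs0 hsq)
    set Cr := C.toReal with hCr_def
    have hCr0 : 0 ≤ Cr := ENNReal.toReal_nonneg
    set δ : ℝ := (ε / (Cr + 1)) ^ (1 / e) with hδ_def
    have hεC : 0 < ε / (Cr + 1) := div_pos hε (by positivity)
    have hδ0 : 0 < δ := Real.rpow_pos_of_pos hεC _
    refine ⟨δ, hδ0, fun j t ht hμt => ?_⟩
    have key : eLpNorm (t.indicator (f j)) r μ ≤ C * ENNReal.ofReal δ ^ e := by
      rw [eLpNorm_indicator_eq_eLpNorm_restrict ht]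
      refine le_trans (eLpNorm_le_eLpNorm_mul_rpow_measure_univ hrp
        ((hf_meas j).restrict)) ?_
      have h1 : eLpNorm (f j) p (μ.restrict t) ≤ C :=
        le_trans (eLpNorm_mono_measure _ Measure.restrict_le_self) (hC (φ j))
      have h2 : (μ.restrict t) Set.univ ≤ ENNReal.ofReal δ := by
        rw [Measure.restrict_apply_univ]; exact hμt
      have h3 : 1 / r.toReal - 1 / p.toReal = e := by
        rw [hr_toReal, hp_toReal]
      rw [h3]
      exact mul_le_mul h1 (ENNReal.rpow_le_rpow h2 he0.le) bot_le bot_le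
    refine key.trans ?_
    have h4 : ENNReal.ofReal δ ^ e = ENNReal.ofReal (ε / (Cr + 1)) := by
      rw [ENNReal.ofReal_rpow_of_nonneg hδ0.le he0.le]
      congr 1
      rw [hδ_def, ← Real.rpow_mul hεC.le, one_div_mul_cancel he0.ne', Real.rpow_one]
    rw [h4, ← ENNReal.ofReal_toReal hC_ne_top, ← hCr_def, ← ENNReal.ofReal_mul hCr0]
    apply ENNReal.ofReal_le_ofReal
    rw [div_eq_mul_inv, ← mul_assoc]
    calc Cr * ε * (Cr + 1)⁻¹ ≤ (Cr + 1) * ε * (Cr + 1)⁻¹ := by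
          have : Cr ≤ Cr + 1 := by linarith
          gcongr
      _ = ε := by field_simp
  -- Vitali's convergence theorem
  have htend : Tendsto (fun j => eLpNorm (f j - g) r μ) atTop (nhds 0) :=
    tendsto_Lp_finite_of_tendsto_ae hr1 hr_ne_top hf_meas hgr hui hg_tendsto
  refine ⟨φ, hφ, ?_⟩
  have hlim : Tendsto (fun j => v (φ j)) atTop (nhds (hgr.toLp g)) := by
    rw [MeasureTheory.Lp.tendsto_Lp_iff_tendsto_eLpNorm _ g hgr]
    refine htend.congr fun j => ?_
    apply eLpNorm_congr_ae
    filter_upwards [(hmem (w (φ j))).coeFn_toLp] with y hy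
    simp only [Pi.sub_apply, hf_def]
    rw [← hwv (φ j)]
    simp [hy]
  exact hlim.cauchySeq
end
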